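/- Suppose N : FinTypeᵒᵖ → Type satisfies the nerve condition, and set G := N(Fin 2). Identify N(Fin 3) with G × G via the bijection (N(φ_0), N(φ_1)). Define multiplication G × G → G as N(ψ) under this identification, where ψ : Fin 2 → Fin 3 is the map 0 ↦ 0, 1 ↦ 2; define e ∈ G as the image of the unique element of N(Fin 1) under N(∇), where ∇ : Fin 2 → Fin 1 is the fold map; and define inversion G → G as N(s), where s : Fin 2 → Fin 2 is the transposition. Then these data make G a group: the multiplication is associative, e is a two-sided identity, and N(s) sends each element to its two-sided inverse. -/

import Mathlib

open CategoryTheory Opposite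

/-- The map `φ_i : Fin 2 → Fin n` (with `n = m + 2`, `0 ≤ i ≤ n − 2`), `0 ↦ i`, `1 ↦ i + 1`,
as a morphism of `FintypeCat`. -/
def phiMap (m : ℕ) (i : Fin (m + 1)) :
    FintypeCat.of (Fin 2) ⟶ FintypeCat.of (Fin (m + 2)) :=
  FintypeCat.homMk fun j => ⟨i.1 + j.1, by omega⟩

/-- A functor `N : FinTypeᵒᵖ → Type` satisfies the nerve condition if for every `n ≥ 2`
the map `(N(φ_0), …, N(φ_{n−2})) : N(Fin n) → N(Fin 2)^{n−1}` is a bijection and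
`N(∅)`, `N(Fin 1)` are singletons. -/
def NerveCond (N : FintypeCat.{0}ᵒᵖ ⥤ Type) : Prop :=
  (∀ m : ℕ, Function.Bijective fun (x : N.obj (op (FintypeCat.of (Fin (m + 2)))))
      (i : Fin (m + 1)) => N.map (phiMap m i).op x) ∧
  (Nonempty (N.obj (op (FintypeCat.of (Fin 0)))) ∧
    Subsingleton (N.obj (op (FintypeCat.of (Fin 0))))) ∧
  (Nonempty (N.obj (op (FintypeCat.of (Fin 1)))) ∧
    Subsingleton (N.obj (op (FintypeCat.of (Fin 1)))))

/-- `ψ : Fin 2 → Fin 3`, `0 ↦ 0`, `1 ↦ 2`. -/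
def psiMap : FintypeCat.of (Fin 2) ⟶ FintypeCat.of (Fin 3) :=
  FintypeCat.homMk fun j => ⟨2 * j.1, by omega⟩

/-- The fold map `∇ : Fin 2 → Fin 1`. -/
def foldMap : FintypeCat.of (Fin 2) ⟶ FintypeCat.of (Fin 1) :=
  FintypeCat.homMk fun _ => (0 : Fin 1)

/-- The transposition `s : Fin 2 → Fin 2`. -/
def swapMap : FintypeCat.of (Fin 2) ⟶ FintypeCat.of (Fin 2) :=
  FintypeCat.homMk fun j => ⟨1 - j.1, by omega⟩

variable (N : FintypeCat.{0}ᵒᵖ ⥤ Type)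

/-- The multiplication on `G := N(Fin 2)`: `N(ψ)` composed with the inverse of the
identification `N(Fin 3) ≅ G × G` given by `(N(φ_0), N(φ_1))`. -/
noncomputable def nerveMul
    (h : Function.Bijective fun (x : N.obj (op (FintypeCat.of (Fin 3)))) (i : Fin 2) =>
      N.map (phiMap 1 i).op x)
    (a b : N.obj (op (FintypeCat.of (Fin 2)))) :
    N.obj (op (FintypeCat.of (Fin 2))) :=
  N.map psiMap.op ((Equiv.ofBijective _ h).symm ![a, b])

/-- The unit of `G := N(Fin 2)`: the image under `N(∇)` of the unique element
of `N(Fin 1)`. -/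
noncomputable def nerveOne (h : Nonempty (N.obj (op (FintypeCat.of (Fin 1))))) :
    N.obj (op (FintypeCat.of (Fin 2))) :=
  N.map foldMap.op h.some

/-- The inversion on `G := N(Fin 2)`, given by `N(s)`. -/
noncomputable def nerveInv (a : N.obj (op (FintypeCat.of (Fin 2)))) :
    N.obj (op (FintypeCat.of (Fin 2))) :=
  N.map swapMap.op a

-- Auxiliary machinery

/-- The map `Fin 2 → Fin n` sending `0 ↦ i`, `1 ↦ j`. -/
def mk2 {n : ℕ} (i j : Fin n) : FintypeCat.of (Fin 2) ⟶ FintypeCat.of (Fin n) := FintypeCat.homMk ![i, j]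

/-- The map `Fin 3 → Fin n` sending `0 ↦ i`, `1 ↦ j`, `2 ↦ k`. -/
def mk3 {n : ℕ} (i j k : Fin n) : FintypeCat.of (Fin 3) ⟶ FintypeCat.of (Fin n) :=
  FintypeCat.homMk ![i, j, k]

/-- The map `Fin 1 → Fin 2` sending `0 ↦ i`. -/
def mk1 (i : Fin 2) : FintypeCat.of (Fin 1) ⟶ FintypeCat.of (Fin 2) := FintypeCat.homMk fun _ => i

lemma pull {X Y Z : FintypeCat} (N : FintypeCat.{0}ᵒᵖ ⥤ Type) (f : X ⟶ Y) (g : Y ⟶ Z)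
    (y : N.obj (op Z)) : N.map f.op (N.map g.op y) = N.map (f ≫ g).op y :=
  (FunctorToTypes.map_comp_apply N g.op f.op y).symm

lemma mk3_comp_phi0 {n : ℕ} (i j k : Fin n) : phiMap 1 0 ≫ mk3 i j k = mk2 i j := by
  ext l; fin_cases l <;> rfl

lemma mk3_comp_phi1 {n : ℕ} (i j k : Fin n) : phiMap 1 1 ≫ mk3 i j k = mk2 j k := by
  ext l; fin_cases l <;> rfl

lemma mk3_comp_psi {n : ℕ} (i j k : Fin n) : psiMap ≫ mk3 i j k = mk2 i k := by
  ext l; fin_cases l <;> rfl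

variable (N : FintypeCat.{0}ᵒᵖ ⥤ Type)

/-- Key lemma: the product of the two short edges of any element of `N(Fin 3)` is the
long edge. -/
lemma nerveMul_edges
    (h : Function.Bijective fun (x : N.obj (op (FintypeCat.of (Fin 3)))) (i : Fin 2) =>
      N.map (phiMap 1 i).op x)
    (x : N.obj (op (FintypeCat.of (Fin 3)))) :
    nerveMul N h (N.map (phiMap 1 0).op x) (N.map (phiMap 1 1).op x)
      = N.map psiMap.op x := by
  have hx : (Equiv.ofBijective _ h).symm
      ![N.map (phiMap 1 0).op x, N.map (phiMap 1 1).op x] = x := by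
    rw [Equiv.symm_apply_eq]
    funext i
    fin_cases i <;> rfl
  unfold nerveMul
  rw [hx]

/-- The fundamental composition law: for `y ∈ N(Fin n)` and `i, j, k : Fin n`, the edge
`E i j := N(![i,j])(y)` satisfies `E i j * E j k = E i k`. -/
lemma mul_edge {n : ℕ}
    (h : Function.Bijective fun (x : N.obj (op (FintypeCat.of (Fin 3)))) (i : Fin 2) =>
      N.map (phiMap 1 i).op x)
    (i j k : Fin n) (y : N.obj (op (FintypeCat.of (Fin n)))) :
    nerveMul N h (N.map (mk2 i j).op y) (N.map (mk2 j k).op y)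
      = N.map (mk2 i k).op y := by
  rw [← mk3_comp_phi0 i j k, ← mk3_comp_phi1 i j k, ← mk3_comp_psi i j k,
    ← pull N _ _ y, ← pull N _ _ y, ← pull N _ _ y]
  exact nerveMul_edges N h _

/-- A constant edge is the unit. -/
lemma edge_const (hs : Subsingleton (N.obj (op (FintypeCat.of (Fin 1)))))
    (hne : Nonempty (N.obj (op (FintypeCat.of (Fin 1)))))
    (i : Fin 2) (a : N.obj (op (FintypeCat.of (Fin 2)))) :
    N.map (mk2 i i).op a = nerveOne N hne := by
  have hcomp : mk2 i i = foldMap ≫ mk1 i := by ext l; fin_cases l <;> rfl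
  rw [hcomp, ← pull N foldMap (mk1 i) a, nerveOne]
  exact congrArg (N.map foldMap.op) (@Subsingleton.elim _ hs _ _)

lemma edge_id (a : N.obj (op (FintypeCat.of (Fin 2)))) :
    N.map (mk2 0 1).op a = a := by
  have : mk2 (0 : Fin 2) 1 = 𝟙 (FintypeCat.of (Fin 2)) := by ext l; fin_cases l <;> rfl
  rw [this]
  exact FunctorToTypes.map_id_apply N a

lemma edge_swap (a : N.obj (op (FintypeCat.of (Fin 2)))) :
    N.map (mk2 1 0).op a = nerveInv N a := by
  have : mk2 (1 : Fin 2) 0 = swapMap := by ext l; fin_cases l <;> rfl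
  rw [this]; rfl

/-- STATEMENT 4: if `N : FinTypeᵒᵖ ⥤ Type` satisfies the nerve condition, then
`G := N(Fin 2)` with the multiplication `N(ψ)` (under the identification
`N(Fin 3) ≅ G × G`), unit `N(∇)(*)` and inversion `N(s)` is a group: multiplication is
associative, the unit is a two-sided identity and `N(s)` sends each element to its
two-sided inverse. -/
theorem nerve_gives_group (hN : NerveCond N) :
    (∀ a b c, nerveMul N (hN.1 1) (nerveMul N (hN.1 1) a b) c
        = nerveMul N (hN.1 1) a (nerveMul N (hN.1 1) b c)) ∧
    (∀ a, nerveMul N (hN.1 1) (nerveOne N hN.2.2.1) a = a ∧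
      nerveMul N (hN.1 1) a (nerveOne N hN.2.2.1) = a) ∧
    (∀ a, nerveMul N (hN.1 1) (nerveInv N a) a = nerveOne N hN.2.2.1 ∧
      nerveMul N (hN.1 1) a (nerveInv N a) = nerveOne N hN.2.2.1) := by
  refine ⟨?_, ?_, ?_⟩
  · intro a b c
    set y := (Equiv.ofBijective _ (hN.1 2)).symm ![a, b, c] with hy
    have hy' : ∀ i : Fin 3, N.map (phiMap 2 i).op y = ![a, b, c] i := fun i =>
      congrFun (Equiv.apply_symm_apply (Equiv.ofBijective _ (hN.1 2)) ![a, b, c]) i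
    have e01 : N.map (mk2 (0 : Fin 4) 1).op y = a := by
      have h : mk2 (0 : Fin 4) 1 = phiMap 2 0 := by ext l; fin_cases l <;> rfl
      rw [h]; exact hy' 0
    have e12 : N.map (mk2 (1 : Fin 4) 2).op y = b := by
      have h : mk2 (1 : Fin 4) 2 = phiMap 2 1 := by ext l; fin_cases l <;> rfl
      rw [h]; exact hy' 1
    have e23 : N.map (mk2 (2 : Fin 4) 3).op y = c := by
      have h : mk2 (2 : Fin 4) 3 = phiMap 2 2 := by ext l; fin_cases l <;> rfl
      rw [h]; exact hy' 2
    have h012 := mul_edge N (hN.1 1) (0 : Fin 4) 1 2 y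
    have h123 := mul_edge N (hN.1 1) (1 : Fin 4) 2 3 y
    have h023 := mul_edge N (hN.1 1) (0 : Fin 4) 2 3 y
    have h013 := mul_edge N (hN.1 1) (0 : Fin 4) 1 3 y
    rw [e01, e12] at h012
    rw [e12, e23] at h123
    rw [e23, ← h012] at h023
    rw [e01, ← h123] at h013
    exact h023.trans h013.symm
  · intro a
    constructor
    · have h := mul_edge N (hN.1 1) (0 : Fin 2) 0 1 a
      rwa [edge_const N hN.2.2.2 hN.2.2.1, edge_id] at h
    · have h := mul_edge N (hN.1 1) (0 : Fin 2) 1 1 a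
      rwa [edge_const N hN.2.2.2 hN.2.2.1, edge_id] at h
  · intro a
    constructor
    · have h := mul_edge N (hN.1 1) (1 : Fin 2) 0 1 a
      rwa [edge_swap, edge_id, edge_const N hN.2.2.2 hN.2.2.1] at h
    · have h := mul_edge N (hN.1 1) (0 : Fin 2) 1 0 a
      rwa [edge_swap, edge_id, edge_const N hN.2.2.2 hN.2.2.1] at h
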